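/- Let p be an odd prime. For every integer t ≥ 1, setting m = p + p² + ⋯ + p^{2t+1} = Σ_{j=1}^{2t+1} p^j, one has N(m, 3t+2) ≥ C(2t+1, t) ≥ 2^t, where C(·,·) is the binomial coefficient. In particular, the sequence (max_{m∈ℕ} N(m,n))_{n≥1} grows at least exponentially in n. -/
import Mathlib


/-- The set `S_r(m,n)` of solutions of the linear system, encoded as pairs of
finitely supported sequences `(a, b) : (ℕ → ℕ) × (ℕ → ℕ)` where index `i`
(for `0 ≤ i < r`) corresponds to `a_{i+1}`, `b_{i+1}`. -/
def SolSet (p r m n : ℕ) : Set ((ℕ → ℕ) × (ℕ → ℕ)) :=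
  {ab | (∀ i, r ≤ i → ab.1 i = 0) ∧ (∀ i, r ≤ i → ab.2 i = 0) ∧
        (∀ i, ab.2 i ≤ 1) ∧
        2 * (∑ i ∈ Finset.range r, ab.1 i) + ∑ i ∈ Finset.range r, ab.2 i = n ∧
        ab.2 0 + ∑ i ∈ Finset.range r, (ab.1 i + ab.2 (i + 1)) * p ^ (i + 1) = m}

/-- `N_r(m,n)`, the number of solutions of the linear system. -/
noncomputable def Ncard (p r m n : ℕ) : ℕ := Nat.card (SolSet p r m n)

/-- The stable value `N(m,n)` (for `p ≥ 2` one has `p ^ (m+1) > m`, so `r = m + 1`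
is in the stable range), with the convention that it vanishes for negative arguments. -/
noncomputable def Nstab (p : ℕ) (m n : ℤ) : ℕ :=
  if 0 ≤ m ∧ 0 ≤ n then Ncard p (m.toNat + 1) m.toNat n.toNat else 0

lemma solset_finite (p r m n : ℕ) : (SolSet p r m n).Finite := by
  have hsub : SolSet p r m n ⊆ (fun q : (Fin r → Fin (n+1)) × (Fin r → Fin 2) =>
      ((fun i => if h : i < r then (q.1 ⟨i, h⟩ : ℕ) else 0),
       (fun i => if h : i < r then (q.2 ⟨i, h⟩ : ℕ) else 0))) '' Set.univ := by
    rintro ⟨a, b⟩ ⟨ha, hb, hb1, hsum, _⟩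
    have hbound : ∀ i, i < r → a i ≤ n := by
      intro i hi
      have h1 : a i ≤ ∑ j ∈ Finset.range r, (a, b).1 j :=
        Finset.single_le_sum (fun _ _ => Nat.zero_le _) (Finset.mem_range.mpr hi)
      omega
    refine ⟨(fun i => ⟨a i, Nat.lt_succ_of_le (hbound i i.2)⟩,
             fun i => ⟨b i, Nat.lt_succ_of_le (hb1 i)⟩), Set.mem_univ _, ?_⟩
    refine Prod.ext ?_ ?_ <;> funext i <;> by_cases h : i < r <;> simp [h]
    · exact (ha i (le_of_not_gt h)).symm
    · exact (hb i (le_of_not_gt h)).symm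
  exact (Set.finite_univ.image _).subset hsub

def Fmap (t : ℕ) (A : Finset ℕ) : (ℕ → ℕ) × (ℕ → ℕ) :=
  (fun i => if i + 1 ∈ A then 1 else 0,
   fun j => if j ∈ Finset.Icc 1 (2 * t + 1) \ A then 1 else 0)

lemma shift_ind (r : ℕ) (A : Finset ℕ) (f : ℕ → ℕ) (hA : ∀ j ∈ A, 1 ≤ j ∧ j < r + 1) :
    ∑ i ∈ Finset.range r, (if i + 1 ∈ A then f (i + 1) else 0) = ∑ j ∈ A, f j := by
  have h0 : 0 ∉ A := fun h => by have := (hA 0 h).1; omega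
  calc ∑ i ∈ Finset.range r, (if i + 1 ∈ A then f (i + 1) else 0)
      = ∑ j ∈ Finset.range (r + 1), (if j ∈ A then f j else 0) := by
        rw [Finset.sum_range_succ']
        simp [h0]
    _ = ∑ j ∈ Finset.range (r + 1) ∩ A, f j := Finset.sum_ite_mem _ _ _
    _ = ∑ j ∈ A, f j := by
        rw [Finset.inter_eq_right.mpr (fun j hj => Finset.mem_range.mpr (hA j hj).2)]

lemma sum_indicator {A : Finset ℕ} {r : ℕ} (f : ℕ → ℕ) (hA : A ⊆ Finset.range r) :
    ∑ j ∈ Finset.range r, (if j ∈ A then f j else 0) = ∑ j ∈ A, f j := by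
  rw [Finset.sum_ite_mem, Finset.inter_eq_right.mpr hA]

/-- for an odd prime `p` and `t ≥ 1`, with `m = Σ_{j=1}^{2t+1} p^j`, one has
`N(m, 3t+2) ≥ C(2t+1, t) ≥ 2^t`. -/
theorem stmt16 (p : ℕ) (hp : p.Prime) (hodd : Odd p) (t : ℕ) (ht : 1 ≤ t) :
    2 ^ t ≤ Nat.choose (2 * t + 1) t ∧
    Nat.choose (2 * t + 1) t ≤
      Nstab p (∑ j ∈ Finset.Icc 1 (2 * t + 1), (p : ℤ) ^ j) ((3 * t + 2 : ℕ) : ℤ) := by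
  have hsymm : ∀ s : ℕ, (2 * s + 1).choose (s + 1) = (2 * s + 1).choose s := by
    intro s
    have := Nat.choose_symm (show s ≤ 2 * s + 1 by omega)
    rw [show 2 * s + 1 - s = s + 1 by omega] at this
    exact this
  constructor
  · clear ht
    induction t with
    | zero => simp
    | succ t ih =>
      have h2 : (2 * t + 2).choose (t + 1) = 2 * (2 * t + 1).choose t := by
        rw [show 2*t+2 = (2*t+1)+1 by ring, Nat.choose_succ_succ, hsymm t]; ring
      calc 2 ^ (t + 1) = 2 * 2 ^ t := by ring
        _ ≤ 2 * (2 * t + 1).choose t := by omega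
        _ = (2 * t + 2).choose (t + 1) := h2.symm
        _ ≤ (2 * (t + 1) + 1).choose (t + 1) := Nat.choose_le_choose _ (by omega)
  · set M : ℕ := ∑ j ∈ Finset.Icc 1 (2 * t + 1), p ^ j with hMdef
    have hp1 : 1 ≤ p := hp.pos
    have hM : 2 * t + 1 ≤ M := by
      calc 2 * t + 1 = ∑ _j ∈ Finset.Icc 1 (2 * t + 1), 1 := by simp
        _ ≤ M := Finset.sum_le_sum (fun j _ => Nat.one_le_pow _ _ hp.pos)
    have hZ : (∑ j ∈ Finset.Icc 1 (2 * t + 1), (p : ℤ) ^ j) = (M : ℤ) := by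
      rw [hMdef]; push_cast; rfl
    rw [hZ]
    have hpos : (0 : ℤ) ≤ (M : ℤ) ∧ (0 : ℤ) ≤ ((3 * t + 2 : ℕ) : ℤ) := by
      constructor <;> positivity
    rw [Nstab, if_pos hpos, Int.toNat_natCast, Int.toNat_natCast, Ncard,
      Nat.card_coe_set_eq]
    set r : ℕ := M + 1 with hrdef
    set P := (Finset.Icc 1 (2 * t + 1)).powersetCard (t + 1) with hPdef
    -- membership
    have hmem : ∀ A ∈ P, Fmap t A ∈ SolSet p r M (3 * t + 2) := by
      intro A hAP
      obtain ⟨hA, hcard⟩ := Finset.mem_powersetCard.mp hAP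
      have hAbd : ∀ j ∈ A, 1 ≤ j ∧ j ≤ 2 * t + 1 := by
        intro j hj; exact Finset.mem_Icc.mp (hA hj)
      refine ⟨?_, ?_, ?_, ?_, ?_⟩
      · intro i hi
        simp only [Fmap]
        rw [if_neg]
        intro h
        have := (hAbd _ h).2
        omega
      · intro i hi
        simp only [Fmap]
        rw [if_neg]
        intro h
        have := (Finset.mem_Icc.mp (Finset.mem_sdiff.mp h).1).2
        omega
      · intro i
        simp only [Fmap]
        split <;> omega
      · have e1 : ∑ i ∈ Finset.range r, (Fmap t A).1 i = t + 1 := by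
          simp only [Fmap]
          rw [shift_ind r A (fun _ => 1) (fun j hj => ⟨(hAbd _ hj).1, by have := (hAbd _ hj).2; omega⟩)]
          simp [hcard]
        have e2 : ∑ i ∈ Finset.range r, (Fmap t A).2 i = t := by
          simp only [Fmap]
          rw [sum_indicator (fun _ => 1) (fun j hj => Finset.mem_range.mpr (by
            have := (Finset.mem_Icc.mp (Finset.mem_sdiff.mp hj).1).2; omega))]
          rw [Finset.sum_const, Finset.card_sdiff_of_subset hA, Nat.card_Icc]
          simp; omega
        rw [e1, e2]; ring
      · have hb0 : (Fmap t A).2 0 = 0 := by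
          simp only [Fmap]
          rw [if_neg]
          intro h
          have := (Finset.mem_Icc.mp (Finset.mem_sdiff.mp h).1).1
          omega
        have hpt : ∀ i, ((Fmap t A).1 i + (Fmap t A).2 (i + 1)) * p ^ (i + 1)
            = (fun j => if j ∈ Finset.Icc 1 (2 * t + 1) then p ^ j else 0) (i + 1) := by
          intro i
          simp only [Fmap, Finset.mem_sdiff]
          by_cases h1 : i + 1 ∈ A
          · have h2 : i + 1 ∈ Finset.Icc 1 (2 * t + 1) := hA h1
            simp [h1, h2]
          · by_cases h2 : i + 1 ∈ Finset.Icc 1 (2 * t + 1) <;> simp [h1, h2]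
        rw [hb0, Finset.sum_congr rfl (fun i _ => hpt i), zero_add]
        show (∑ i ∈ Finset.range r, if i + 1 ∈ Finset.Icc 1 (2 * t + 1) then p ^ (i + 1) else 0) = M
        rw [shift_ind r (Finset.Icc 1 (2 * t + 1)) (fun j => p ^ j) (fun j hj => by
          have := Finset.mem_Icc.mp hj; omega)]
    -- injectivity
    have hinj : Set.InjOn (Fmap t) ↑P := by
      have key : ∀ B C : Finset ℕ, B ⊆ Finset.Icc 1 (2 * t + 1) →
          Fmap t B = Fmap t C → B ⊆ C := by
        intro B C hB heq j hj
        have hj1 : 1 ≤ j := (Finset.mem_Icc.mp (hB hj)).1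
        have := congrFun (congrArg Prod.fst heq) (j - 1)
        simp only [Fmap] at this
        rw [Nat.sub_add_cancel hj1] at this
        by_cases h : j ∈ C
        · exact h
        · simp [hj, h] at this
      intro A1 h1 A2 h2 heq
      have hA1 := (Finset.mem_powersetCard.mp (by exact_mod_cast h1 : A1 ∈ P)).1
      have hA2 := (Finset.mem_powersetCard.mp (by exact_mod_cast h2 : A2 ∈ P)).1
      exact Finset.Subset.antisymm (key A1 A2 hA1 heq) (key A2 A1 hA2 heq.symm)
    calc (2 * t + 1).choose t = (2 * t + 1).choose (t + 1) := (hsymm t).symm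
      _ = P.card := by
          rw [hPdef, Finset.card_powersetCard, Nat.card_Icc]
          norm_num
      _ = (↑P : Set (Finset ℕ)).ncard := (Set.ncard_coe_finset P).symm
      _ = (Fmap t '' ↑P).ncard := (Set.ncard_image_of_injOn hinj).symm
      _ ≤ (SolSet p r M (3 * t + 2)).ncard := by
          apply Set.ncard_le_ncard ?_ (solset_finite p r M (3 * t + 2))
          rintro x ⟨A, hA, rfl⟩
          exact hmem A (by exact_mod_cast hA)
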